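/- Let A ∈ ℝ^{m×d} with rows a₁ᵀ, …, a_mᵀ and b ∈ ℝ^m be such that the polytope P = {x ∈ ℝ^d : A x ≥ b} is bounded and has nonempty interior, and for x in the interior of P let H(x) = Σ_{i=1}^m a_i a_iᵀ/(a_iᵀx − b_i)² and σ_i(x) = a_iᵀ H(x)^{−1} a_i/(a_iᵀx − b_i)². Then the volumetric barrier V(x) = (1/2)·log(det H(x)) is differentiable on the interior of P and its gradient equals ∇V(x) = −Σ_{i=1}^m σ_i(x)·a_i/(a_iᵀx − b_i). -/

import Mathlib

open Matrix

noncomputable def dotCLM {d : ℕ} (a : Fin d → ℝ) : (Fin d → ℝ) →L[ℝ] ℝ :=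
  LinearMap.toContinuousLinearMap
    { toFun := fun v => a ⬝ᵥ v
      map_add' := fun u v => dotProduct_add a u v
      map_smul' := fun c v => by simp }

@[simp] lemma dotCLM_apply {d : ℕ} (a v : Fin d → ℝ) : dotCLM a v = a ⬝ᵥ v := rfl

noncomputable def cdet (d : ℕ) : ContinuousMultilinearMap ℝ (fun _ : Fin d => (Fin d → ℝ)) ℝ :=
  { (Matrix.detRowAlternating : (Fin d → ℝ) [⋀^Fin d]→ₗ[ℝ] ℝ).toMultilinearMap with
    cont := by
      show Continuous fun M : Matrix (Fin d) (Fin d) ℝ => M.det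
      exact continuous_id.matrix_det }

@[simp] lemma cdet_apply {d : ℕ} (M : Matrix (Fin d) (Fin d) ℝ) : cdet d M = M.det := rfl

lemma sum_mul_det_updateRow {d : ℕ} (M : Matrix (Fin d) (Fin d) ℝ) (hsym : Mᵀ = M)
    (hdet : IsUnit M.det) (w : Fin d → ℝ) :
    ∑ j, w j * (M.updateRow j w).det = M.det * (w ⬝ᵥ (M⁻¹ *ᵥ w)) := by
  have h1 : ∀ j, (M.updateRow j w).det = cramer M w j := by
    intro j
    rw [cramer_apply, ← det_transpose (M.updateCol j w), ← updateRow_transpose, hsym]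
  have h2 : cramer M w = M.det • (M⁻¹ *ᵥ w) := by
    calc cramer M w = M⁻¹ *ᵥ (M *ᵥ cramer M w) := by
          rw [mulVec_mulVec, nonsing_inv_mul M hdet, one_mulVec]
      _ = M⁻¹ *ᵥ (M.det • w) := by rw [mulVec_cramer]
      _ = M.det • (M⁻¹ *ᵥ w) := mulVec_smul _ _ _
  simp only [h1, h2, Pi.smul_apply, smul_eq_mul, dotProduct, Finset.mul_sum]
  exact Finset.sum_congr rfl fun j _ => by ring


lemma det_updateRow_finset_sum {d m : ℕ} (M : Matrix (Fin d) (Fin d) ℝ) (j : Fin d)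
    (f : Fin m → Fin d → ℝ) :
    (M.updateRow j (∑ i, f i)).det = ∑ i, (M.updateRow j (f i)).det :=
  (Matrix.detRowAlternating :
    (Fin d → ℝ) [⋀^Fin d]→ₗ[ℝ] ℝ).toMultilinearMap.map_update_sum Finset.univ j f M

lemma dotProduct_finset_sum {d m : ℕ} (u : Fin d → ℝ) (f : Fin m → Fin d → ℝ) :
    u ⬝ᵥ (∑ i, f i) = ∑ i, u ⬝ᵥ f i := by
  simp only [dotProduct, Finset.sum_apply, Finset.mul_sum]
  exact Finset.sum_comm

lemma finset_sum_dotProduct {d m : ℕ} (v : Fin d → ℝ) (f : Fin m → Fin d → ℝ) :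
    (∑ i, f i) ⬝ᵥ v = ∑ i, f i ⬝ᵥ v := by
  simp only [dotProduct, Finset.sum_apply, Finset.sum_mul]
  exact Finset.sum_comm

/-- the volumetric barrier `V(x) = (1/2)·log det H(x)` of a bounded polytope
`P = {x : Ax ≥ b}` with nonempty interior is differentiable on the interior and its gradient
is `−Σᵢ σᵢ(x)·aᵢ/(aᵢᵀx − bᵢ)`, where `σᵢ(x) = aᵢᵀH(x)⁻¹aᵢ/(aᵢᵀx − bᵢ)²`. -/
theorem min_min_statement_16 {m d : ℕ} (a : Fin m → Fin d → ℝ) (b : Fin m → ℝ)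
    (P : Set (Fin d → ℝ)) (hP : P = {x | ∀ i, b i ≤ a i ⬝ᵥ x})
    (hbdd : Bornology.IsBounded P) (hint : (interior P).Nonempty)
    (H : (Fin d → ℝ) → Matrix (Fin d) (Fin d) ℝ)
    (hH : ∀ x, H x = ∑ i, ((a i ⬝ᵥ x - b i) ^ 2)⁻¹ • vecMulVec (a i) (a i))
    (σ : Fin m → (Fin d → ℝ) → ℝ)
    (hσ : ∀ i x, σ i x = (a i ⬝ᵥ ((H x)⁻¹ *ᵥ a i)) / (a i ⬝ᵥ x - b i) ^ 2)
    (V : (Fin d → ℝ) → ℝ)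
    (hV : ∀ x, V x = 1 / 2 * Real.log (H x).det) :
    ∀ x : Fin d → ℝ, (∀ i, b i < a i ⬝ᵥ x) →
      ∃ G : (Fin d → ℝ) →L[ℝ] ℝ,
        (∀ v, G v = (-∑ i, (σ i x / (a i ⬝ᵥ x - b i)) • a i) ⬝ᵥ v) ∧ HasFDerivAt V G x := by
  intro x hx
  have hs : ∀ i, 0 < a i ⬝ᵥ x - b i := fun i => sub_pos.2 (hx i)
  -- the rows span: only the zero vector is orthogonal to all of them
  have hspan : ∀ v : Fin d → ℝ, (∀ i, a i ⬝ᵥ v = 0) → v = 0 := by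
    intro v hv
    by_contra hvne
    obtain ⟨y, hy⟩ := hint
    have hyP : y ∈ P := interior_subset hy
    obtain ⟨C, hC⟩ := isBounded_iff_forall_norm_le.1 hbdd
    have hvpos : 0 < ‖v‖ := norm_pos_iff.2 hvne
    have hCy : ‖y‖ ≤ C := hC _ hyP
    set t : ℝ := (C + ‖y‖ + 1) / ‖v‖ with ht
    have htpos : 0 ≤ t := by
      have h0 : (0 : ℝ) ≤ ‖y‖ := norm_nonneg _
      have : (0:ℝ) ≤ C + ‖y‖ + 1 := by linarith
      positivity
    have hmem : y + t • v ∈ P := by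
      rw [hP]
      intro i
      have h1 : b i ≤ a i ⬝ᵥ y := by rw [hP] at hyP; exact hyP i
      have : a i ⬝ᵥ (y + t • v) = a i ⬝ᵥ y := by
        simp [dotProduct_add, dotProduct_smul, hv i]
      rw [this]; exact h1
    have h1 : ‖y + t • v‖ ≤ C := hC _ hmem
    have h2 : ‖t • v‖ ≤ ‖y + t • v‖ + ‖y‖ := by
      have := norm_sub_le (y + t • v) y
      simpa using this
    have h3 : ‖t • v‖ = C + ‖y‖ + 1 := by
      rw [norm_smul, Real.norm_eq_abs, abs_of_nonneg htpos, ht,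
        div_mul_cancel₀ _ hvpos.ne']
    linarith
  -- quadratic form of H x
  have hmulvec : ∀ v : Fin d → ℝ,
      (H x) *ᵥ v = ∑ i, (((a i ⬝ᵥ x - b i) ^ 2)⁻¹ * (a i ⬝ᵥ v)) • a i := by
    intro v
    rw [hH]
    ext k
    simp only [Matrix.mulVec, dotProduct, Matrix.sum_apply, Matrix.smul_apply,
      vecMulVec_apply, smul_eq_mul, Finset.sum_apply, Pi.smul_apply, Finset.sum_mul,
      Finset.mul_sum]
    rw [Finset.sum_comm]
    exact Finset.sum_congr rfl fun i _ => Finset.sum_congr rfl fun j _ => by ring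
  have hquad : ∀ v : Fin d → ℝ,
      v ⬝ᵥ ((H x) *ᵥ v) = ∑ i, ((a i ⬝ᵥ x - b i) ^ 2)⁻¹ * (a i ⬝ᵥ v) ^ 2 := by
    intro v
    rw [hmulvec, dotProduct_finset_sum]
    refine Finset.sum_congr rfl fun i _ => ?_
    rw [dotProduct_smul, smul_eq_mul, dotProduct_comm v (a i)]
    ring
  have hsymm : (H x)ᵀ = H x := by
    rw [hH]
    ext k l
    simp only [Matrix.transpose_apply, Matrix.sum_apply, Matrix.smul_apply,
      vecMulVec_apply, smul_eq_mul]
    exact Finset.sum_congr rfl fun i _ => by ring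
  have hherm : (H x).IsHermitian := by
    have : (H x)ᴴ = (H x)ᵀ := by
      ext k l; simp [Matrix.conjTranspose_apply]
    exact this.trans hsymm
  have hposdef : (H x).PosDef := by
    refine posDef_iff_dotProduct_mulVec.mpr ⟨hherm, fun v hv => ?_⟩
    have hstar : star v = v := by funext j; simp
    rw [hstar, hquad]
    have hnonneg : ∀ i ∈ Finset.univ, (0:ℝ) ≤ ((a i ⬝ᵥ x - b i) ^ 2)⁻¹ * (a i ⬝ᵥ v) ^ 2 :=
      fun i _ => by positivity
    obtain ⟨i, hi⟩ : ∃ i, a i ⬝ᵥ v ≠ 0 := by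
      by_contra h
      push_neg at h
      exact hv (hspan v h)
    refine Finset.sum_pos' hnonneg ⟨i, Finset.mem_univ i, ?_⟩
    have h1 : (0:ℝ) < ((a i ⬝ᵥ x - b i) ^ 2)⁻¹ := by
      have := hs i
      positivity
    have h2 : (0:ℝ) < (a i ⬝ᵥ v) ^ 2 := (sq_nonneg _).lt_of_ne (Ne.symm (pow_ne_zero 2 hi))
    exact mul_pos h1 h2
  have hdetpos : 0 < (H x).det := hposdef.det_pos
  have hdetne : (H x).det ≠ 0 := hdetpos.ne'
  have hdetunit : IsUnit (H x).det := isUnit_iff_ne_zero.2 hdetne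
  -- differentiation setup
  set Hp : (Fin d → ℝ) → (Fin d → Fin d → ℝ) :=
    fun y => ∑ i, ((a i ⬝ᵥ y - b i) ^ 2)⁻¹ • (vecMulVec (a i) (a i) : Fin d → Fin d → ℝ)
    with hHpdef
  have hHx : ∀ y, H y = Hp y := fun y => by rw [hH]; rfl
  set c' : Fin m → ℝ :=
    fun i => -(2 * (a i ⬝ᵥ x - b i)) / ((a i ⬝ᵥ x - b i) ^ 2) ^ 2 with hc'
  have hci : ∀ i : Fin m, HasFDerivAt (fun y : Fin d → ℝ => ((a i ⬝ᵥ y - b i) ^ 2)⁻¹)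
      (c' i • dotCLM (a i)) x := by
    intro i
    have h1 : HasFDerivAt (fun y : Fin d → ℝ => a i ⬝ᵥ y - b i) (dotCLM (a i)) x :=
      ((dotCLM (a i)).hasFDerivAt).sub_const (b i)
    have h2 : HasDerivAt (fun t : ℝ => (t ^ 2)⁻¹) (c' i) (a i ⬝ᵥ x - b i) := by
      have := (hasDerivAt_pow 2 (a i ⬝ᵥ x - b i)).inv (pow_ne_zero 2 (hs i).ne')
      refine this.congr_deriv ?_
      rw [hc']
      push_cast
      ring
    exact HasDerivAt.comp_hasFDerivAt (f := fun y : Fin d → ℝ => a i ⬝ᵥ y - b i) x h2 h1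
  set F' : (Fin d → ℝ) →L[ℝ] (Fin d → Fin d → ℝ) :=
    ∑ i, (c' i • dotCLM (a i)).smulRight (vecMulVec (a i) (a i) : Fin d → Fin d → ℝ)
    with hF'
  have hHp' : HasFDerivAt Hp F' x :=
    HasFDerivAt.fun_sum fun i _ => (hci i).smul_const _
  have hfun : (fun y => (H y).det) = ⇑(cdet d) ∘ Hp := by
    funext y
    exact congrArg Matrix.det (hHx y)
  have hcomp : HasFDerivAt (fun y => (H y).det) (((cdet d).linearDeriv (Hp x)).comp F') x := by
    rw [hfun]
    exact ((cdet d).hasFDerivAt (Hp x)).comp x hHp'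
  have hlog : HasDerivAt Real.log ((H x).det)⁻¹ ((H x).det) := Real.hasDerivAt_log hdetne
  have hVder : HasFDerivAt V
      ((1/2 : ℝ) • (((H x).det)⁻¹ • (((cdet d).linearDeriv (Hp x)).comp F'))) x := by
    have h := (hlog.comp_hasFDerivAt x hcomp).const_mul (1/2 : ℝ)
    have hVfun : V = fun y => (1/2 : ℝ) * (Real.log ∘ fun y => (H y).det) y := by
      funext y; rw [hV y]; rfl
    rw [hVfun]
    exact h
  refine ⟨_, fun v => ?_, hVder⟩
  -- now compute the derivative applied to v
  have happ : (((cdet d).linearDeriv (Hp x)).comp F') v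
      = ∑ i, (c' i * (a i ⬝ᵥ v)) * ((H x).det * (a i ⬝ᵥ ((H x)⁻¹ *ᵥ a i))) := by
    have hF'v : F' v = ∑ i, (c' i * (a i ⬝ᵥ v)) •
        (vecMulVec (a i) (a i) : Fin d → Fin d → ℝ) := by
      rw [hF']
      simp [ContinuousLinearMap.sum_apply, ContinuousLinearMap.smulRight_apply,
        ContinuousLinearMap.smul_apply, smul_smul]
      exact Finset.sum_congr rfl fun i _ => rfl
    rw [ContinuousLinearMap.comp_apply, hF'v]
    erw [ContinuousMultilinearMap.linearDeriv_apply]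
    have hrow : ∀ j : Fin d, (∑ i, (c' i * (a i ⬝ᵥ v)) •
        (vecMulVec (a i) (a i) : Fin d → Fin d → ℝ)) j
        = ∑ i, (c' i * (a i ⬝ᵥ v) * a i j) • a i := by
      intro j
      funext k
      simp only [Matrix.sum_apply, Matrix.smul_apply, vecMulVec_apply, smul_eq_mul,
        Finset.sum_apply, Pi.smul_apply]
      exact Finset.sum_congr rfl fun i _ => by ring
    calc ∑ j, (cdet d) (Function.update (Hp x) j
            ((∑ i, (c' i * (a i ⬝ᵥ v)) • (vecMulVec (a i) (a i) : Fin d → Fin d → ℝ)) j))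
        = ∑ j, ∑ i, (c' i * (a i ⬝ᵥ v) * a i j) * ((H x).updateRow j (a i)).det := by
          refine Finset.sum_congr rfl fun j _ => ?_
          have hupd : ∀ w : Fin d → ℝ, (cdet d) (Function.update (Hp x) j w)
              = ((H x).updateRow j w).det := by
            intro w
            show (Matrix.of (Function.update (Hp x) j w)).det = _
            rw [show Hp x = H x from (hHx x).symm]
            rfl
          rw [hrow j, hupd, det_updateRow_finset_sum]
          exact Finset.sum_congr rfl fun i _ => det_updateRow_smul _ _ _ _
      _ = ∑ i, (c' i * (a i ⬝ᵥ v)) * ((H x).det * (a i ⬝ᵥ ((H x)⁻¹ *ᵥ a i))) := by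
          rw [Finset.sum_comm]
          refine Finset.sum_congr rfl fun i _ => ?_
          rw [← sum_mul_det_updateRow (H x) hsymm hdetunit (a i), Finset.mul_sum]
          exact Finset.sum_congr rfl fun j _ => by ring
  have hR : (-∑ i, (σ i x / (a i ⬝ᵥ x - b i)) • a i) ⬝ᵥ v
      = ∑ i, -((σ i x / (a i ⬝ᵥ x - b i)) * (a i ⬝ᵥ v)) := by
    rw [neg_dotProduct, finset_sum_dotProduct, ← Finset.sum_neg_distrib]
    exact Finset.sum_congr rfl fun i _ => by rw [smul_dotProduct, smul_eq_mul]
  rw [hR, ContinuousLinearMap.smul_apply, ContinuousLinearMap.smul_apply, happ,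
    smul_eq_mul, smul_eq_mul, Finset.mul_sum, Finset.mul_sum]
  refine Finset.sum_congr rfl fun i _ => ?_
  rw [hσ i x]
  simp only [hc']
  have hsne : a i ⬝ᵥ x - b i ≠ 0 := (hs i).ne'
  field_simp
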